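/- Let f : [0,1] → ℝ be piecewise affine with at most p pieces, and suppose g : [0,1] → [0,1] is a continuous function whose graph crosses the level 1/2 at least n times in the sense that there exist points 0 ≤ x₀ < x₁ < ⋯ < x_n ≤ 1 with g(x_i) ≥ 1/2 for even i and g(x_i) < 1/2 for odd i (or vice versa). If p < n/2, then ∫₀¹ |f(x) − g(x)| dx ≥ (a positive constant depending on the minimal gap between consecutive x_i and the deviation of g from 1/2). In the specific case g = τ^[k] with its 2^k + 1 equispaced extrema on [0,1], any piecewise affine f with at most 2^{k−3} pieces satisfies ∫₀¹ |f − τ^[k]| ≥ 1/64. -/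

import Mathlib

open MeasureTheory Set

/-- The tent function. -/
noncomputable def tent (x : ℝ) : ℝ :=
  if x ∈ Set.Icc (0 : ℝ) (1 / 2) then 2 * x
  else if x ∈ Set.Ioc (1 / 2 : ℝ) 1 then 2 * (1 - x)
  else 0

/-- `f` is piecewise affine on `[0,1]` with at most `n` pieces: `[0,1]` is
covered by `n` intervals on each of which `f` is affine. -/
def PiecewiseAffineOnUnitAtMost (f : ℝ → ℝ) (n : ℕ) : Prop :=
  ∃ S : Fin n → Set ℝ, (∀ i, (S i).OrdConnected) ∧ Set.Icc (0 : ℝ) 1 ⊆ (⋃ i, S i) ∧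
    ∀ i, ∃ a b : ℝ, ∀ x ∈ S i, f x = a * x + b

lemma tent_left {x : ℝ} (h0 : 0 ≤ x) (h1 : x ≤ 1/2) : tent x = 2 * x := by
  unfold tent; rw [if_pos ⟨h0, h1⟩]

lemma tent_right {x : ℝ} (h0 : 1/2 ≤ x) (h1 : x ≤ 1) : tent x = 2 * (1 - x) := by
  unfold tent
  rcases eq_or_lt_of_le h0 with h | h
  · rw [if_pos ⟨by linarith, by linarith⟩, ← h]; ring
  · rw [if_neg (by simp [Set.mem_Icc]; intro; linarith), if_pos ⟨h, h1⟩]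

lemma measurable_tent : Measurable tent := by
  unfold tent
  exact Measurable.ite measurableSet_Icc (by fun_prop)
    (Measurable.ite measurableSet_Ioc (by fun_prop) (by fun_prop))

lemma tent_mem {x : ℝ} (hx : x ∈ Set.Icc (0:ℝ) 1) : tent x ∈ Set.Icc (0:ℝ) 1 := by
  obtain ⟨h0, h1⟩ := hx
  rcases le_or_gt x (1/2) with h | h
  · rw [tent_left h0 h]; constructor <;> linarith
  · rw [tent_right h.le h1]; constructor <;> linarith

lemma tent_iter_mem (k : ℕ) {x : ℝ} (hx : x ∈ Set.Icc (0:ℝ) 1) :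
    tent^[k] x ∈ Set.Icc (0:ℝ) 1 := by
  induction k generalizing x with
  | zero => simpa using hx
  | succ n ih => rw [Function.iterate_succ_apply]; exact ih (tent_mem hx)

lemma measurable_tent_iter (k : ℕ) : Measurable (tent^[k]) := by
  induction k with
  | zero => exact measurable_id
  | succ n ih => rw [Function.iterate_succ]; exact ih.comp measurable_tent

lemma integrableOn_tent_iter (k : ℕ) : IntegrableOn (tent^[k]) (Set.Icc (0:ℝ) 1) := by
  apply MeasureTheory.Integrable.mono' (integrable_const (1:ℝ))
    (measurable_tent_iter k).aestronglyMeasurable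
  rw [ae_restrict_iff' measurableSet_Icc]
  filter_upwards with x hx
  have := tent_iter_mem k hx
  rw [Real.norm_eq_abs, abs_le]
  exact ⟨by linarith [this.1], this.2⟩

lemma pw_integrable {f : ℝ → ℝ} {p : ℕ} (hf : PiecewiseAffineOnUnitAtMost f p) :
    IntegrableOn f (Set.Icc (0:ℝ) 1) := by
  classical
  obtain ⟨S, hconn, hcov, haff⟩ := hf
  choose a b hab using haff
  set T : Fin p → Set ℝ := fun i =>
    (S i ∩ Set.Icc (0:ℝ) 1) \ (⋃ (j : Fin p) (_ : j < i), S j) with hT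
  have hTmeas : ∀ i, MeasurableSet (T i) := by
    intro i
    exact (((hconn i).measurableSet).inter measurableSet_Icc).diff
      (MeasurableSet.iUnion fun j => MeasurableSet.iUnion fun _ => (hconn j).measurableSet)
  have key : (Set.Icc (0:ℝ) 1).indicator f =
      fun x => ∑ i : Fin p, (T i).indicator (fun y => a i * y + b i) x := by
    funext x
    by_cases hx : x ∈ Set.Icc (0:ℝ) 1
    · have hne : (Finset.univ.filter (fun i => x ∈ S i)).Nonempty := by
        obtain ⟨_, ⟨i, rfl⟩, hi⟩ := hcov hx
        exact ⟨i, by simpa using hi⟩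
      set i₀ := (Finset.univ.filter (fun i => x ∈ S i)).min' hne with hi₀
      have hxS : x ∈ S i₀ := by
        have := (Finset.univ.filter (fun i => x ∈ S i)).min'_mem hne
        simpa using this
      have hxT : x ∈ T i₀ := by
        refine ⟨⟨hxS, hx⟩, ?_⟩
        simp only [Set.mem_iUnion, not_exists]
        intro j hj hxj
        have : i₀ ≤ j := Finset.min'_le _ _ (by simpa using hxj)
        exact absurd hj (not_lt.mpr this)
      rw [Set.indicator_of_mem hx]
      rw [Finset.sum_eq_single i₀]
      · rw [Set.indicator_of_mem hxT, hab i₀ x hxS]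
      · intro j _ hj
        apply Set.indicator_of_notMem
        intro hxTj
        rcases lt_or_gt_of_ne hj with h | h
        · have : i₀ ≤ j := Finset.min'_le _ _ (by simpa using hxTj.1.1)
          exact absurd h (not_lt.mpr this)
        · exact hxTj.2 (Set.mem_iUnion.mpr ⟨i₀, Set.mem_iUnion.mpr ⟨h, hxS⟩⟩)
      · intro h; exact absurd (Finset.mem_univ i₀) h
    · rw [Set.indicator_of_notMem hx]
      symm
      apply Finset.sum_eq_zero
      intro i _
      apply Set.indicator_of_notMem
      intro hxT
      exact hx hxT.1.2
  rw [← MeasureTheory.integrable_indicator_iff measurableSet_Icc, key]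
  apply MeasureTheory.integrable_finset_sum
  intro i _
  apply MeasureTheory.IntegrableOn.integrable_indicator _ (hTmeas i)
  apply MeasureTheory.IntegrableOn.mono_set (t := Set.Icc (0:ℝ) 1)
  · exact (Continuous.integrableOn_Icc (by fun_prop))
  · exact fun y hy => hy.1.2

lemma affine_on_clean {f : ℝ → ℝ} {p : ℕ} {S : Fin p → Set ℝ}
    (hconn : ∀ i, (S i).OrdConnected) (hcov : Set.Icc (0:ℝ) 1 ⊆ ⋃ i, S i)
    (haff : ∀ i, ∃ a b : ℝ, ∀ x ∈ S i, f x = a * x + b)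
    {u w : ℝ} (huw : u < w) (hsub : Set.Ioo u w ⊆ Set.Icc (0:ℝ) 1)
    (hclean : ∀ i, sSup (S i ∩ Set.Icc 0 1) ∉ Set.Ioo u w) :
    ∃ a b : ℝ, ∀ x ∈ Set.Ioo u w, f x = a * x + b := by
  classical
  choose A B hAB using haff
  have key : ∀ x ∈ Set.Ioo u w, ∃ i, Set.Ico x w ⊆ S i := by
    intro x hx
    obtain ⟨_, ⟨i, rfl⟩, hi⟩ := hcov (hsub hx)
    refine ⟨i, ?_⟩
    have hbdd : BddAbove (S i ∩ Set.Icc (0:ℝ) 1) :=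
      BddAbove.mono (Set.inter_subset_right) bddAbove_Icc
    have hmem : x ∈ S i ∩ Set.Icc (0:ℝ) 1 := ⟨hi, hsub hx⟩
    have hxle : x ≤ sSup (S i ∩ Set.Icc 0 1) := le_csSup hbdd hmem
    have hws : w ≤ sSup (S i ∩ Set.Icc 0 1) := by
      by_contra hlt
      exact hclean i ⟨lt_of_lt_of_le hx.1 hxle, not_le.mp hlt⟩
    intro y hy
    obtain ⟨z, hz, hyz⟩ := exists_lt_of_lt_csSup ⟨x, hmem⟩ (lt_of_lt_of_le hy.2 hws)
    exact (hconn i).out hi hz.1 ⟨hy.1, hyz.le⟩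
  set m := (u + w) / 2 with hm
  set m' := (m + w) / 2 with hm'
  have hum : u < m := by rw [hm]; linarith
  have hmw : m < w := by rw [hm]; linarith
  have hmm' : m < m' := by rw [hm']; linarith
  have hm'w : m' < w := by rw [hm']; linarith
  obtain ⟨i₀, hi₀⟩ := key m ⟨hum, hmw⟩
  refine ⟨A i₀, B i₀, ?_⟩
  intro x hx
  rcases le_or_gt m x with h | h
  · exact hAB i₀ x (hi₀ ⟨h, hx.2⟩)
  · obtain ⟨i, hi⟩ := key x hx
    have e1 : A i * m + B i = A i₀ * m + B i₀ := by
      rw [← hAB i m (hi ⟨h.le, hmw⟩), ← hAB i₀ m (hi₀ ⟨le_refl m, hmw⟩)]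
    have e2 : A i * m' + B i = A i₀ * m' + B i₀ := by
      rw [← hAB i m' (hi ⟨by linarith, hm'w⟩), ← hAB i₀ m' (hi₀ ⟨hmm'.le, hm'w⟩)]
    have hA : A i = A i₀ := by
      have : (A i - A i₀) * (m - m') = 0 := by linarith
      rcases mul_eq_zero.mp this with h' | h'
      · linarith
      · exfalso; have : m ≠ m' := ne_of_lt hmm'; apply this; linarith
    have hB : B i = B i₀ := by rw [hA] at e1; linarith
    rw [hAB i x (hi ⟨le_refl x, hx.2⟩), hA, hB]

lemma pigeonhole_intervals {p m : ℕ} (hm : p < m) (s : Fin p → ℝ)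
    (L R : Fin m → ℝ)
    (hdisj : ∀ j j' : Fin m, j ≠ j' →
      Disjoint (Set.Ioo (L j) (R j)) (Set.Ioo (L j') (R j'))) :
    ∃ j : Fin m, ∀ i, s i ∉ Set.Ioo (L j) (R j) := by
  by_contra h
  push_neg at h
  choose ι hι using h
  have hinj : Function.Injective ι := by
    intro j j' he
    by_contra hne
    exact Set.disjoint_left.mp (hdisj j j' hne) (hι j) (he ▸ hι j')
  have := Fintype.card_le_of_injective ι hinj
  simp only [Fintype.card_fin] at this
  omega

lemma exists_ne_point {g : ℝ → ℝ} {u v w a b : ℝ} (h1 : u < v) (h2 : v < w)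
    (hcase : (1/2 ≤ g u ∧ g v < 1/2 ∧ 1/2 ≤ g w) ∨
             (g u < 1/2 ∧ 1/2 ≤ g v ∧ g w < 1/2)) :
    ∃ y ∈ Set.Icc u w, a * y + b ≠ g y := by
  by_contra h
  push_neg at h
  have hu := h u ⟨le_refl u, by linarith⟩
  have hv := h v ⟨h1.le, h2.le⟩
  have hw := h w ⟨by linarith, le_refl w⟩
  have key : (w - u) * (a * v + b) = (w - v) * (a * u + b) + (v - u) * (a * w + b) := by
    ring
  rcases hcase with ⟨c1, c2, c3⟩ | ⟨c1, c2, c3⟩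
  · rw [hu] at key; rw [hv] at key; rw [hw] at key
    nlinarith [sub_pos.mpr h1, sub_pos.mpr h2]
  · rw [hu] at key; rw [hv] at key; rw [hw] at key
    nlinarith [sub_pos.mpr h1, sub_pos.mpr h2]

lemma pos_integral {f g : ℝ → ℝ} {u w y a b : ℝ}
    (huw : u < w) (hsub : Set.Icc u w ⊆ Set.Icc (0:ℝ) 1)
    (hg : ContinuousOn g (Set.Icc (0:ℝ) 1))
    (hf : ∀ x ∈ Set.Ioo u w, f x = a * x + b)
    (hy : y ∈ Set.Icc u w) (hne : a * y + b ≠ g y)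
    (hint : IntegrableOn (fun x => |f x - g x|) (Set.Icc (0:ℝ) 1)) :
    0 < ∫ t in Set.Icc (0:ℝ) 1, |f t - g t| := by
  set h : ℝ → ℝ := fun x => |a * x + b - g x| with hh
  have hcont : ContinuousOn h (Set.Icc u w) := by
    apply ContinuousOn.abs
    exact ContinuousOn.sub (Continuous.continuousOn (by fun_prop)) (hg.mono hsub)
  have hε : 0 < h y := abs_pos.mpr (sub_ne_zero.mpr hne)
  set ε := h y with hεdef
  have hcw : ContinuousWithinAt h (Set.Icc u w) y := hcont y hy
  have hev : ∀ᶠ x in nhdsWithin y (Set.Icc u w), ε/2 < h x :=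
    hcw.eventually (eventually_gt_nhds (by linarith))
  obtain ⟨δ, hδ, hball'⟩ := Metric.nhdsWithin_basis_ball.eventually_iff.mp hev
  have hball : ∀ x ∈ Set.Icc u w, dist x y < δ → ε/2 < h x := by
    intro x hx hd
    exact hball' ⟨Metric.mem_ball.mpr hd, hx⟩
  set t₁ := max u (y - δ/2) with ht₁
  set t₂ := min w (y + δ/2) with ht₂
  have ht12 : t₁ < t₂ := by
    rw [ht₁, ht₂]
    rcases hy with ⟨hy1, hy2⟩
    apply max_lt <;> apply lt_min <;> linarith
  have hJsub : Set.Ioo t₁ t₂ ⊆ Set.Ioo u w := by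
    intro x hx
    exact ⟨lt_of_le_of_lt (le_max_left _ _) hx.1, lt_of_lt_of_le hx.2 (min_le_left _ _)⟩
  have hJd : ∀ x ∈ Set.Ioo t₁ t₂, ε/2 ≤ |f x - g x| := by
    intro x hx
    have hxd : dist x y < δ := by
      rw [Real.dist_eq, abs_lt]
      constructor
      · have := hx.1; rw [ht₁] at this
        have := lt_of_le_of_lt (le_max_right _ _) this; linarith
      · have := hx.2; rw [ht₂] at this
        have := lt_of_lt_of_le this (min_le_right _ _); linarith
    have hxm : x ∈ Set.Icc u w := Set.Ioo_subset_Icc_self (hJsub hx)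
    have := hball x hxm hxd
    rw [hf x (hJsub hx)]
    exact this.le
  have hIJ : IntegrableOn (fun x => |f x - g x|) (Set.Ioo t₁ t₂) :=
    hint.mono_set (fun x hx => hsub (Set.Ioo_subset_Icc_self (hJsub hx)))
  have step1 : ε/2 * (volume (Set.Ioo t₁ t₂)).toReal ≤ ∫ x in Set.Ioo t₁ t₂, |f x - g x| :=
    setIntegral_ge_of_const_le_real measurableSet_Ioo (by simp) hJd hIJ
  have step2 : ∫ x in Set.Ioo t₁ t₂, |f x - g x| ≤ ∫ t in Set.Icc (0:ℝ) 1, |f t - g t| := by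
    apply setIntegral_mono_set hint
    · filter_upwards with x using abs_nonneg _
    · exact HasSubset.Subset.eventuallyLE
        (fun x hx => hsub (Set.Ioo_subset_Icc_self (hJsub hx)))
  have hvol : (volume (Set.Ioo t₁ t₂)).toReal = t₂ - t₁ := by
    rw [Real.volume_Ioo, ENNReal.toReal_ofReal (by linarith)]
  calc (0:ℝ) < ε/2 * (t₂ - t₁) := mul_pos (by linarith) (by linarith)
    _ = ε/2 * (volume (Set.Ioo t₁ t₂)).toReal := by rw [hvol]
    _ ≤ ∫ x in Set.Ioo t₁ t₂, |f x - g x| := step1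
    _ ≤ _ := step2

lemma tent_iter_formula : ∀ (k j : ℕ), j < 2^k → ∀ x : ℝ,
    ((2*(j:ℝ) ≤ 2^(k+1) * x → 2^(k+1) * x ≤ 2*(j:ℝ)+1 →
        tent^[k+1] x = 2^(k+1)*x - 2*(j:ℝ)) ∧
     (2*(j:ℝ)+1 ≤ 2^(k+1) * x → 2^(k+1) * x ≤ 2*(j:ℝ)+2 →
        tent^[k+1] x = 2*(j:ℝ)+2 - 2^(k+1)*x)) := by
  intro k
  induction k with
  | zero =>
    intro j hj x
    interval_cases j
    constructor
    · intro h1 h2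
      push_cast at h1 h2 ⊢
      norm_num at h1 h2 ⊢
      rw [tent_left (by linarith) (by linarith)]
    · intro h1 h2
      push_cast at h1 h2 ⊢
      norm_num at h1 h2 ⊢
      rw [tent_right (by linarith) (by linarith)]
      ring
  | succ k IH =>
    intro j hj x
    have h2kpos : (0:ℝ) < 2^(k+1+1) := by positivity
    have e1 : (2:ℝ)^(k+1) = 2*2^k := by ring
    have e2 : (2:ℝ)^(k+1+1) = 2*2^(k+1) := by ring
    have hjr0 : (0:ℝ) ≤ (j:ℝ) := Nat.cast_nonneg j
    have hjb : (j:ℝ) ≤ 2^(k+1) - 1 := by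
      have : (j:ℝ) + 1 ≤ ((2^(k+1) : ℕ) : ℝ) := by exact_mod_cast hj
      push_cast at this; linarith
    constructor
    · intro h1 h2
      rw [Function.iterate_succ_apply]
      rcases le_or_gt ((2:ℝ)^(k+1+1) * x) (2^(k+1)) with hle | hlt
      · have hx0 : 0 ≤ x := by
          have : (2:ℝ)^(k+1+1) * 0 ≤ 2^(k+1+1) * x := by rw [mul_zero]; linarith
          exact le_of_mul_le_mul_left this h2kpos
        have hx2 : x ≤ 1/2 := by
          have : (2:ℝ)^(k+1+1) * x ≤ 2^(k+1+1) * (1/2) := by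
            rw [show (2:ℝ)^(k+1+1) * (1/2) = 2^(k+1) by ring]; exact hle
          exact le_of_mul_le_mul_left this h2kpos
        rw [tent_left hx0 hx2]
        have hjle : j ≤ 2^k := by
          have hr : 2*(j:ℝ) ≤ 2^(k+1) := le_trans h1 hle
          have : (j:ℝ) ≤ ((2^k : ℕ) : ℝ) := by push_cast; linarith
          exact_mod_cast this
        rcases lt_or_eq_of_le hjle with hjk | hjk
        · have := (IH j hjk (2*x)).1
          rw [show (2:ℝ)^(k+1) * (2*x) = 2^(k+1+1) * x by ring] at this
          rw [this h1 h2]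
        · subst hjk
          push_cast at h1 h2 ⊢
          have hu : (2:ℝ)^(k+1+1) * x = 2^(k+1) := by linarith
          have hik : 2^k - 1 < 2^k := by
            have := Nat.one_le_two_pow (n := k); omega
          have hic : ((2^k - 1 : ℕ) : ℝ) = 2^k - 1 := by
            have h1' := Nat.one_le_two_pow (n := k)
            push_cast [Nat.cast_sub h1']; ring
          have := (IH (2^k - 1) hik (2*x)).2
          rw [hic, show (2:ℝ)^(k+1) * (2*x) = 2^(k+1+1) * x by ring, hu] at this
          rw [this (by linarith) (by linarith)]
          linarith
      · have hx2 : 1/2 ≤ x := by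
          have : (2:ℝ)^(k+1+1) * (1/2) ≤ 2^(k+1+1) * x := by
            rw [show (2:ℝ)^(k+1+1) * (1/2) = 2^(k+1) by ring]; exact hlt.le
          exact le_of_mul_le_mul_left this h2kpos
        have hx1 : x ≤ 1 := by
          have : (2:ℝ)^(k+1+1) * x ≤ 2^(k+1+1) * 1 := by
            rw [mul_one]; linarith
          exact le_of_mul_le_mul_left this h2kpos
        rw [tent_right hx2 hx1]
        have hj2k : 2^k ≤ j := by
          have hr : (2:ℝ)^(k+1) < 2*(j:ℝ)+1 := lt_of_lt_of_le hlt h2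
          have hn : (2^(k+1) : ℕ) < 2*j+1 := by exact_mod_cast hr
          have hp : (2:ℕ)^(k+1) = 2*2^k := by ring
          omega
        set i := 2^(k+1) - 1 - j with hidef
        have hik : i < 2^k := by
          have hp : (2:ℕ)^(k+1) = 2*2^k := by ring
          omega
        have hicast : (i:ℝ) + (j:ℝ) + 1 = 2^(k+1) := by
          have hn : i + j + 1 = 2^(k+1) := by
            have hp : (2:ℕ)^(k+1) = 2*2^k := by ring
            omega
          have := congrArg (fun n : ℕ => (n:ℝ)) hn
          push_cast at this
          linarith
        have := (IH i hik (2*(1-x))).2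
        rw [show (2:ℝ)^(k+1) * (2*(1-x)) = 2*2^(k+1) - 2^(k+1+1)*x by ring] at this
        rw [this (by linarith) (by linarith)]
        linarith
    · intro h1 h2
      rw [Function.iterate_succ_apply]
      rcases le_or_gt ((2:ℝ)^(k+1+1) * x) (2^(k+1)) with hle | hlt
      · have hx0 : 0 ≤ x := by
          have : (2:ℝ)^(k+1+1) * 0 ≤ 2^(k+1+1) * x := by rw [mul_zero]; linarith
          exact le_of_mul_le_mul_left this h2kpos
        have hx2 : x ≤ 1/2 := by
          have : (2:ℝ)^(k+1+1) * x ≤ 2^(k+1+1) * (1/2) := by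
            rw [show (2:ℝ)^(k+1+1) * (1/2) = 2^(k+1) by ring]; exact hle
          exact le_of_mul_le_mul_left this h2kpos
        rw [tent_left hx0 hx2]
        have hjk : j < 2^k := by
          have hr : 2*(j:ℝ)+1 ≤ 2^(k+1) := le_trans h1 hle
          have hn : 2*j+1 ≤ (2^(k+1) : ℕ) := by exact_mod_cast hr
          have hp : (2:ℕ)^(k+1) = 2*2^k := by ring
          omega
        have := (IH j hjk (2*x)).2
        rw [show (2:ℝ)^(k+1) * (2*x) = 2^(k+1+1) * x by ring] at this
        rw [this h1 h2]
      · have hx2 : 1/2 ≤ x := by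
          have : (2:ℝ)^(k+1+1) * (1/2) ≤ 2^(k+1+1) * x := by
            rw [show (2:ℝ)^(k+1+1) * (1/2) = 2^(k+1) by ring]; exact hlt.le
          exact le_of_mul_le_mul_left this h2kpos
        have hx1 : x ≤ 1 := by
          have : (2:ℝ)^(k+1+1) * x ≤ 2^(k+1+1) * 1 := by
            rw [mul_one]; linarith
          exact le_of_mul_le_mul_left this h2kpos
        rw [tent_right hx2 hx1]
        have hj2k : 2^k ≤ j := by
          have hr : (2:ℝ)^(k+1) < 2*(j:ℝ)+2 := lt_of_lt_of_le hlt h2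
          have hn : (2^(k+1) : ℕ) < 2*j+2 := by exact_mod_cast hr
          have hp : (2:ℕ)^(k+1) = 2*2^k := by ring
          omega
        set i := 2^(k+1) - 1 - j with hidef
        have hik : i < 2^k := by
          have hp : (2:ℕ)^(k+1) = 2*2^k := by ring
          omega
        have hicast : (i:ℝ) + (j:ℝ) + 1 = 2^(k+1) := by
          have hn : i + j + 1 = 2^(k+1) := by
            have hp : (2:ℕ)^(k+1) = 2*2^k := by ring
            omega
          have := congrArg (fun n : ℕ => (n:ℝ)) hn
          push_cast at this
          linarith
        have := (IH i hik (2*(1-x))).1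
        rw [show (2:ℝ)^(k+1) * (2*(1-x)) = 2*2^(k+1) - 2^(k+1+1)*x by ring] at this
        rw [this (by linarith) (by linarith)]
        linarith

lemma integral_affine (α β l r : ℝ) :
    ∫ x in l..r, (α*x+β) = α*(r^2-l^2)/2 + β*(r-l) := by
  rw [intervalIntegral.integral_add ((by fun_prop : Continuous fun x : ℝ => α*x).intervalIntegrable _ _)
    (intervalIntegrable_const)]
  rw [intervalIntegral.integral_const_mul, integral_id, intervalIntegral.integral_const]
  simp [smul_eq_mul]; ring

lemma bump_lower {f g : ℝ → ℝ} {a b c h : ℝ} (hh : 0 < h)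
    (hg1 : ∀ x ∈ Set.Icc c (c+h), g x = (x - c)/h)
    (hg2 : ∀ x ∈ Set.Icc (c+h) (c+2*h), g x = (c+2*h-x)/h)
    (hf : ∀ x ∈ Set.Ioo c (c+2*h), f x = a*x+b)
    (hint : IntegrableOn (fun x => |f x - g x|) (Set.Icc c (c+2*h)))
    (hint2 : IntegrableOn (fun x => f x - g x) (Set.Icc c (c+2*h))) :
    h/2 ≤ ∫ x in Set.Icc c (c+2*h), |f x - g x| := by
  have h0 : h ≠ 0 := ne_of_gt hh
  have hae : ∀ᵐ x : ℝ, x ≠ c+2*h := by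
    rw [ae_iff]
    simpa using measure_singleton (α := ℝ) (c+2*h)
  have iabs : ∀ l r, c ≤ l → l ≤ c+2*h → c ≤ r → r ≤ c+2*h →
      IntervalIntegrable (fun x => |f x - g x|) volume l r := by
    intro l r h1 h2 h3 h4
    refine intervalIntegrable_iff.mpr (hint.mono_set ?_)
    intro x hx
    exact ⟨le_trans (le_min h1 h3) hx.1.le, le_trans hx.2 (max_le h2 h4)⟩
  have isgn : ∀ l r, c ≤ l → l ≤ c+2*h → c ≤ r → r ≤ c+2*h →
      IntervalIntegrable (fun x => f x - g x) volume l r := by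
    intro l r h1 h2 h3 h4
    refine intervalIntegrable_iff.mpr (hint2.mono_set ?_)
    intro x hx
    exact ⟨le_trans (le_min h1 h3) hx.1.le, le_trans hx.2 (max_le h2 h4)⟩
  rw [MeasureTheory.integral_Icc_eq_integral_Ioc,
    ← intervalIntegral.integral_of_le (by linarith : c ≤ c+2*h)]
  have hsplit : ∫ x in c..(c+2*h), |f x - g x| =
      ((∫ x in c..(c+h/2), |f x - g x|) + (∫ x in (c+h/2)..(c+h), |f x - g x|)
        + (∫ x in (c+h)..(c+3*(h/2)), |f x - g x|)) + (∫ x in (c+3*(h/2))..(c+2*h), |f x - g x|) := by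
    rw [intervalIntegral.integral_add_adjacent_intervals
        (iabs c (c+h/2) le_rfl (by linarith) (by linarith) (by linarith))
        (iabs (c+h/2) (c+h) (by linarith) (by linarith) (by linarith) (by linarith))]
    rw [intervalIntegral.integral_add_adjacent_intervals
        (iabs c (c+h) le_rfl (by linarith) (by linarith) (by linarith))
        (iabs (c+h) (c+3*(h/2)) (by linarith) (by linarith) (by linarith) (by linarith))]
    rw [intervalIntegral.integral_add_adjacent_intervals
        (iabs c (c+3*(h/2)) le_rfl (by linarith) (by linarith) (by linarith))
        (iabs (c+3*(h/2)) (c+2*h) (by linarith) (by linarith) (by linarith) (by linarith))]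
  rw [hsplit]
  have bnd1 : ∫ x in c..(c+h/2), (f x - g x) ≤ ∫ x in c..(c+h/2), |f x - g x| := by
    apply intervalIntegral.integral_mono_on (by linarith)
      (isgn c (c+h/2) le_rfl (by linarith) (by linarith) (by linarith))
      (iabs c (c+h/2) le_rfl (by linarith) (by linarith) (by linarith))
    exact fun x _ => le_abs_self _
  have bnd2 : -(∫ x in (c+h/2)..(c+h), (f x - g x)) ≤ ∫ x in (c+h/2)..(c+h), |f x - g x| := by
    rw [← intervalIntegral.integral_neg]
    apply intervalIntegral.integral_mono_on (by linarith)
      ((isgn (c+h/2) (c+h) (by linarith) (by linarith) (by linarith) (by linarith)).neg)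
      (iabs (c+h/2) (c+h) (by linarith) (by linarith) (by linarith) (by linarith))
    exact fun x _ => neg_le_abs _
  have bnd3 : -(∫ x in (c+h)..(c+3*(h/2)), (f x - g x)) ≤ ∫ x in (c+h)..(c+3*(h/2)), |f x - g x| := by
    rw [← intervalIntegral.integral_neg]
    apply intervalIntegral.integral_mono_on (by linarith)
      ((isgn (c+h) (c+3*(h/2)) (by linarith) (by linarith) (by linarith) (by linarith)).neg)
      (iabs (c+h) (c+3*(h/2)) (by linarith) (by linarith) (by linarith) (by linarith))
    exact fun x _ => neg_le_abs _
  have bnd4 : ∫ x in (c+3*(h/2))..(c+2*h), (f x - g x) ≤ ∫ x in (c+3*(h/2))..(c+2*h), |f x - g x| := by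
    apply intervalIntegral.integral_mono_on (by linarith)
      (isgn (c+3*(h/2)) (c+2*h) (by linarith) (by linarith) (by linarith) (by linarith))
      (iabs (c+3*(h/2)) (c+2*h) (by linarith) (by linarith) (by linarith) (by linarith))
    exact fun x _ => le_abs_self _
  have comp : ∀ (l r α β : ℝ), c ≤ l → l ≤ r → r ≤ c+2*h →
      (∀ x ∈ Set.Ioc l r, g x = α * x + β) →
      ∫ x in l..r, (f x - g x) = (a-α)*(r^2-l^2)/2 + (b-β)*(r-l) := by
    intro l r α β h1 h2 h3 hgf
    rw [show (a-α)*(r^2-l^2)/2 + (b-β)*(r-l) = ∫ x in l..r, ((a-α)*x+(b-β)) from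
      (integral_affine _ _ _ _).symm]
    apply intervalIntegral.integral_congr_ae
    filter_upwards [hae] with x hx hxI
    rw [Set.uIoc_of_le h2] at hxI
    have hxo : x ∈ Set.Ioo c (c+2*h) := by
      constructor
      · exact lt_of_le_of_lt h1 hxI.1
      · rcases lt_or_eq_of_le (le_trans hxI.2 h3) with h' | h'
        · exact h'
        · exact absurd h' hx
    rw [hf x hxo, hgf x hxI]
    ring
  have A1 := comp c (c+h/2) (1/h) (-(c/h)) le_rfl (by linarith) (by linarith)
    (fun x hx => by rw [hg1 x ⟨hx.1.le, by linarith [hx.2]⟩]; field_simp; ring)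
  have A2 := comp (c+h/2) (c+h) (1/h) (-(c/h)) (by linarith) (by linarith) (by linarith)
    (fun x hx => by rw [hg1 x ⟨by linarith [hx.1], hx.2⟩]; field_simp; ring)
  have A3 := comp (c+h) (c+3*(h/2)) (-(1/h)) ((c+2*h)/h) (by linarith) (by linarith) (by linarith)
    (fun x hx => by rw [hg2 x ⟨hx.1.le, by linarith [hx.2]⟩]; field_simp; ring)
  have A4 := comp (c+3*(h/2)) (c+2*h) (-(1/h)) ((c+2*h)/h) (by linarith) (by linarith) le_rfl
    (fun x hx => by rw [hg2 x ⟨by linarith [hx.1], hx.2⟩]; field_simp; ring)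
  have key : (∫ x in c..(c+h/2), (f x - g x)) - (∫ x in (c+h/2)..(c+h), (f x - g x))
      - (∫ x in (c+h)..(c+3*(h/2)), (f x - g x)) + (∫ x in (c+3*(h/2))..(c+2*h), (f x - g x)) = h/2 := by
    rw [A1, A2, A3, A4]
    field_simp
    ring
  linarith [bnd1, bnd2, bnd3, bnd4]

lemma part_one (f g : ℝ → ℝ) (p n : ℕ) (x : Fin (n + 1) → ℝ)
    (hpw : PiecewiseAffineOnUnitAtMost f p)
    (hgc : ContinuousOn g (Set.Icc (0 : ℝ) 1))
    (hmono : StrictMono x) (hx0 : 0 ≤ x 0) (hxn : x (Fin.last n) ≤ 1)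
    (hosc : (∀ i : Fin (n + 1), if Even (i : ℕ) then 1 / 2 ≤ g (x i) else g (x i) < 1 / 2) ∨
        (∀ i : Fin (n + 1), if Even (i : ℕ) then g (x i) < 1 / 2 else 1 / 2 ≤ g (x i)))
    (hpn : p < n / 2) :
    ∃ C : ℝ, 0 < C ∧ C ≤ ∫ t in Set.Icc (0 : ℝ) 1, |f t - g t| := by
  classical
  obtain ⟨S, hconn, hcov, haff⟩ := hpw
  have hfint : IntegrableOn f (Set.Icc (0:ℝ) 1) := pw_integrable ⟨S, hconn, hcov, haff⟩
  have hgint : IntegrableOn g (Set.Icc (0:ℝ) 1) := hgc.integrableOn_compact isCompact_Icc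
  have habs : IntegrableOn (fun t => |f t - g t|) (Set.Icc (0:ℝ) 1) := (hfint.sub hgint).abs
  have h2p2 : 2*p+2 ≤ n := by omega
  set s : Fin p → ℝ := fun i => sSup (S i ∩ Set.Icc 0 1) with hs
  set L : Fin (p+1) → ℝ := fun j => x ⟨2*(j:ℕ), by have := j.isLt; omega⟩ with hL
  set R : Fin (p+1) → ℝ := fun j => x ⟨2*(j:ℕ)+2, by have := j.isLt; omega⟩ with hR
  have hdisj : ∀ j j' : Fin (p+1), j ≠ j' →
      Disjoint (Set.Ioo (L j) (R j)) (Set.Ioo (L j') (R j')) := by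
    intro j j' hne
    rw [Set.disjoint_left]
    intro t ht ht'
    have horder : ∀ a b : Fin (p+1), (a:ℕ) < (b:ℕ) → R a ≤ L b := by
      intro a c hac
      exact (hmono.monotone (by simp [Fin.mk_le_mk]; omega : (⟨2*(a:ℕ)+2, by have := a.isLt; omega⟩ : Fin (n+1)) ≤ ⟨2*(c:ℕ), by have := c.isLt; omega⟩))
    rcases Nat.lt_or_ge (j:ℕ) (j':ℕ) with h | h
    · have := horder j j' h; linarith [ht.2, ht'.1]
    · have hlt : (j':ℕ) < (j:ℕ) := by
        rcases Nat.lt_or_ge (j':ℕ) (j:ℕ) with h' | h'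
        · exact h'
        · exact absurd (Fin.val_injective (le_antisymm h' h)) hne
      have := horder j' j hlt; linarith [ht.1, ht.2, ht'.1, ht'.2]
  obtain ⟨j, hj⟩ := pigeonhole_intervals (Nat.lt_succ_self p) s L R hdisj
  have hLR : L j < R j := hmono (by simp [Fin.mk_lt_mk])
  have hL0 : 0 ≤ L j := le_trans hx0 (hmono.monotone (Fin.zero_le _))
  have hR1 : R j ≤ 1 := le_trans (hmono.monotone (Fin.le_last _)) hxn
  have hsub : Set.Ioo (L j) (R j) ⊆ Set.Icc (0:ℝ) 1 :=
    fun t ht => ⟨le_trans hL0 ht.1.le, le_trans ht.2.le hR1⟩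
  obtain ⟨a, b, hab⟩ := affine_on_clean hconn hcov haff hLR hsub hj
  set v : ℝ := x ⟨2*(j:ℕ)+1, by have := j.isLt; omega⟩ with hv
  have hLv : L j < v := hmono (by simp [Fin.mk_lt_mk])
  have hvR : v < R j := hmono (by simp [Fin.mk_lt_mk])
  have heven : Even (2*(j:ℕ)) := even_two_mul _
  have hodd : ¬ Even (2*(j:ℕ)+1) := by simp [Nat.even_add_one, heven]
  have heven2 : Even (2*(j:ℕ)+2) := by rw [Nat.even_add]; simp [heven]
  have hcase : (1/2 ≤ g (L j) ∧ g v < 1/2 ∧ 1/2 ≤ g (R j)) ∨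
      (g (L j) < 1/2 ∧ 1/2 ≤ g v ∧ g (R j) < 1/2) := by
    rcases hosc with hA | hB
    · left
      refine ⟨?_, ?_, ?_⟩
      · have := hA ⟨2*(j:ℕ), by have := j.isLt; omega⟩; rwa [if_pos heven] at this
      · have := hA ⟨2*(j:ℕ)+1, by have := j.isLt; omega⟩; rwa [if_neg hodd] at this
      · have := hA ⟨2*(j:ℕ)+2, by have := j.isLt; omega⟩; rwa [if_pos heven2] at this
    · right
      refine ⟨?_, ?_, ?_⟩
      · have := hB ⟨2*(j:ℕ), by have := j.isLt; omega⟩; rwa [if_pos heven] at this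
      · have := hB ⟨2*(j:ℕ)+1, by have := j.isLt; omega⟩; rwa [if_neg hodd] at this
      · have := hB ⟨2*(j:ℕ)+2, by have := j.isLt; omega⟩; rwa [if_pos heven2] at this
  obtain ⟨y, hy, hne⟩ := exists_ne_point (a := a) (b := b) hLv hvR hcase
  have hsub' : Set.Icc (L j) (R j) ⊆ Set.Icc (0:ℝ) 1 :=
    fun t ht => ⟨le_trans hL0 ht.1, le_trans ht.2 hR1⟩
  exact ⟨_, pos_integral hLR hsub' hgc hab hy hne habs, le_refl _⟩
lemma part_two (k : ℕ) (hk : 3 ≤ k) (f : ℝ → ℝ)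
    (hpw : PiecewiseAffineOnUnitAtMost f (2 ^ (k - 3))) :
    (1 : ℝ) / 64 ≤ ∫ t in Set.Icc (0 : ℝ) 1, |f t - tent^[k] t| := by
  classical
  obtain ⟨K, rfl⟩ : ∃ K, k = K + 3 := ⟨k - 3, by omega⟩
  have hpw' : PiecewiseAffineOnUnitAtMost f (2^K) := by simpa using hpw
  obtain ⟨S, hconn, hcov, haff⟩ := hpw'
  set g : ℝ → ℝ := tent^[K+3] with hg
  have hfint : IntegrableOn f (Set.Icc (0:ℝ) 1) := pw_integrable ⟨S, hconn, hcov, haff⟩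
  have hgint : IntegrableOn g (Set.Icc (0:ℝ) 1) := integrableOn_tent_iter (K+3)
  have habs : IntegrableOn (fun t => |f t - g t|) (Set.Icc (0:ℝ) 1) := (hfint.sub hgint).abs
  set hr : ℝ := ((2:ℝ)^(K+3))⁻¹ with hhr
  have hrpos : 0 < hr := by rw [hhr]; positivity
  have hrmul : (2:ℝ)^(K+3) * hr = 1 := mul_inv_cancel₀ (by positivity)
  have e2' : (2:ℝ)^(K+3) = 2*2^(K+2) := by ring
  set L : Fin (2^(K+2)) → ℝ := fun j => 2*((j:ℕ):ℝ) * hr with hL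
  set R : Fin (2^(K+2)) → ℝ := fun j => (2*((j:ℕ):ℝ)+2) * hr with hR
  have hRL : ∀ j, R j = L j + 2*hr := by intro j; rw [hL, hR]; ring
  have horder : ∀ j j' : Fin (2^(K+2)), (j:ℕ) < (j':ℕ) → R j ≤ L j' := by
    intro j j' hjj
    rw [hL, hR]
    have hc : (2*((j:ℕ):ℝ)+2) ≤ 2*((j':ℕ):ℝ) := by
      have : ((j:ℕ):ℝ) + 1 ≤ ((j':ℕ):ℝ) := by exact_mod_cast hjj
      linarith
    exact mul_le_mul_of_nonneg_right hc hrpos.le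
  have hL0 : ∀ j, 0 ≤ L j := by
    intro j; rw [hL]
    positivity
  have hR1 : ∀ j, R j ≤ 1 := by
    intro j
    rw [hR]
    have hjlt : ((j:ℕ):ℝ) + 1 ≤ 2^(K+2) := by exact_mod_cast j.isLt
    calc (2*((j:ℕ):ℝ)+2)*hr ≤ 2^(K+3)*hr := by
          apply mul_le_mul_of_nonneg_right _ hrpos.le
          rw [e2']; linarith
      _ = 1 := hrmul
  have hsubIcc : ∀ j, Set.Icc (L j) (R j) ⊆ Set.Icc (0:ℝ) 1 :=
    fun j t ht => ⟨le_trans (hL0 j) ht.1, le_trans ht.2 (hR1 j)⟩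
  set s : Fin (2^K) → ℝ := fun i => sSup (S i ∩ Set.Icc 0 1) with hs
  have hdisjIoo : ∀ j j' : Fin (2^(K+2)), j ≠ j' →
      Disjoint (Set.Ioo (L j) (R j)) (Set.Ioo (L j') (R j')) := by
    intro j j' hne
    rw [Set.disjoint_left]
    intro t ht ht'
    rcases Nat.lt_or_ge (j:ℕ) (j':ℕ) with h | h
    · have := horder j j' h; linarith [ht.1, ht.2, ht'.1, ht'.2]
    · have hlt : (j':ℕ) < (j:ℕ) := by
        rcases Nat.lt_or_ge (j':ℕ) (j:ℕ) with h' | h'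
        · exact h'
        · exact absurd (Fin.val_injective (le_antisymm h' h)) hne
      have := horder j' j hlt; linarith [ht.1, ht.2, ht'.1, ht'.2]
  set Bad : Finset (Fin (2^(K+2))) :=
    Finset.univ.filter (fun j => ∃ i, s i ∈ Set.Ioo (L j) (R j)) with hBad
  have hBadcard : Bad.card ≤ 2^K := by
    have hch : ∀ j : Fin (2^(K+2)), ∃ i : Fin (2^K),
        j ∈ Bad → s i ∈ Set.Ioo (L j) (R j) := by
      intro j
      by_cases hj : j ∈ Bad
      · obtain ⟨i, hi⟩ := (Finset.mem_filter.mp hj).2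
        exact ⟨i, fun _ => hi⟩
      · exact ⟨⟨0, Nat.two_pow_pos K⟩, fun h => absurd h hj⟩
    choose ι hι using hch
    calc Bad.card ≤ (Finset.univ : Finset (Fin (2^K))).card := by
          apply Finset.card_le_card_of_injOn ι (fun _ _ => Finset.mem_univ _)
          intro j hj j' hj' he
          by_contra hne
          exact Set.disjoint_left.mp (hdisjIoo j j' hne) (hι j hj) (he ▸ hι j' hj')
      _ = 2^K := by simp
  set Good : Finset (Fin (2^(K+2))) := Finset.univ \ Bad with hGood
  have hGoodcard : 3*2^K ≤ Good.card := by
    have hc : Good.card = 2^(K+2) - Bad.card := by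
      rw [hGood, Finset.card_sdiff_of_subset (Finset.subset_univ _), Finset.card_univ, Fintype.card_fin]
    have he : (2:ℕ)^(K+2) = 4*2^K := by ring
    omega
  have hbump : ∀ j ∈ Good, hr/2 ≤ ∫ x in Set.Ioc (L j) (R j), |f x - g x| := by
    intro j hjg
    have hclean : ∀ i, s i ∉ Set.Ioo (L j) (R j) := by
      have hnb : j ∉ Bad := (Finset.mem_sdiff.mp hjg).2
      rw [hBad, Finset.mem_filter] at hnb
      push_neg at hnb
      exact fun i => hnb (Finset.mem_univ j) i
    have hLR : L j < R j := by rw [hRL j]; linarith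
    have hsub : Set.Ioo (L j) (R j) ⊆ Set.Icc (0:ℝ) 1 :=
      fun t ht => hsubIcc j (Set.Ioo_subset_Icc_self ht)
    obtain ⟨a, b, hab⟩ := affine_on_clean hconn hcov haff hLR hsub hclean
    have hscale1 : ∀ t u : ℝ, t*hr ≤ u → t ≤ 2^(K+3)*u := by
      intro t u h
      calc t = 2^(K+3)*(t*hr) := by
            rw [show (2:ℝ)^(K+3)*(t*hr) = t*((2:ℝ)^(K+3)*hr) from by ring, hrmul, mul_one]
        _ ≤ 2^(K+3)*u := mul_le_mul_of_nonneg_left h (by positivity)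
    have hscale2 : ∀ t u : ℝ, u ≤ t*hr → 2^(K+3)*u ≤ t := by
      intro t u h
      calc (2:ℝ)^(K+3)*u ≤ 2^(K+3)*(t*hr) := mul_le_mul_of_nonneg_left h (by positivity)
        _ = t := by
            rw [show (2:ℝ)^(K+3)*(t*hr) = t*((2:ℝ)^(K+3)*hr) from by ring, hrmul, mul_one]
    have hidx : K+2+1 = K+3 := rfl
    have hg1 : ∀ y ∈ Set.Icc (L j) (L j + hr), g y = (y - L j)/hr := by
      intro y hy
      have hy1 : 2*((j:ℕ):ℝ) ≤ 2^(K+3)*y := hscale1 _ _ hy.1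
      have hy2 : (2:ℝ)^(K+3)*y ≤ 2*((j:ℕ):ℝ)+1 := by
        apply hscale2
        rw [show (2*((j:ℕ):ℝ)+1)*hr = 2*((j:ℕ):ℝ)*hr + hr from by ring]
        exact hy.2
      have hval := (tent_iter_formula (K+2) (j:ℕ) j.isLt y).1 hy1 hy2
      have hymul : (2:ℝ)^(K+3)*y*hr = y := by
        rw [show (2:ℝ)^(K+3)*y*hr = y*((2:ℝ)^(K+3)*hr) from by ring, hrmul, mul_one]
      rw [hg, hval, eq_div_iff (ne_of_gt hrpos), hL]
      linear_combination hymul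
    have hg2 : ∀ y ∈ Set.Icc (L j + hr) (L j + 2*hr), g y = (L j + 2*hr - y)/hr := by
      intro y hy
      have hy1 : 2*((j:ℕ):ℝ)+1 ≤ 2^(K+3)*y := by
        apply hscale1
        rw [show (2*((j:ℕ):ℝ)+1)*hr = 2*((j:ℕ):ℝ)*hr + hr from by ring]
        exact hy.1
      have hy2 : (2:ℝ)^(K+3)*y ≤ 2*((j:ℕ):ℝ)+2 := by
        apply hscale2
        rw [show (2*((j:ℕ):ℝ)+2)*hr = 2*((j:ℕ):ℝ)*hr + 2*hr from by ring]
        exact hy.2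
      have hval := (tent_iter_formula (K+2) (j:ℕ) j.isLt y).2 hy1 hy2
      have hymul : (2:ℝ)^(K+3)*y*hr = y := by
        rw [show (2:ℝ)^(K+3)*y*hr = y*((2:ℝ)^(K+3)*hr) from by ring, hrmul, mul_one]
      rw [hg, hval, eq_div_iff (ne_of_gt hrpos), hL]
      linear_combination -hymul
    have hsub2 : Set.Icc (L j) (L j + 2*hr) ⊆ Set.Icc (0:ℝ) 1 := by
      rw [← hRL j]; exact hsubIcc j
    have hint1 : IntegrableOn (fun y => |f y - g y|) (Set.Icc (L j) (L j + 2*hr)) :=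
      habs.mono_set hsub2
    have hfg : IntegrableOn (fun y => f y - g y) (Set.Icc (0:ℝ) 1) := hfint.sub hgint
    have hint2 : IntegrableOn (fun y => f y - g y) (Set.Icc (L j) (L j + 2*hr)) :=
      hfg.mono_set hsub2
    have hble := bump_lower hrpos hg1 hg2
      (fun y hy => hab y (by rw [hRL j]; exact hy)) hint1 hint2
    rw [show L j + 2*hr = R j from (hRL j).symm,
      MeasureTheory.integral_Icc_eq_integral_Ioc] at hble
    exact hble
  have hpair : (↑Good : Set (Fin (2^(K+2)))).Pairwise
      (Function.onFun Disjoint (fun j => Set.Ioc (L j) (R j))) := by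
    intro j _ j' _ hne
    have : Disjoint (Set.Ioc (L j) (R j)) (Set.Ioc (L j') (R j')) := by
      rw [Set.disjoint_left]
      intro t ht ht'
      rcases Nat.lt_or_ge (j:ℕ) (j':ℕ) with h | h
      · have := horder j j' h; linarith [ht.1, ht.2, ht'.1, ht'.2]
      · have hlt : (j':ℕ) < (j:ℕ) := by
          rcases Nat.lt_or_ge (j':ℕ) (j:ℕ) with h' | h'
          · exact h'
          · exact absurd (Fin.val_injective (le_antisymm h' h)) hne
        have := horder j' j hlt; linarith [ht.1, ht.2, ht'.1, ht'.2]
    exact this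
  have hIocsub : ∀ j : Fin (2^(K+2)), Set.Ioc (L j) (R j) ⊆ Set.Icc (0:ℝ) 1 :=
    fun j t ht => hsubIcc j ⟨ht.1.le, ht.2⟩
  have hUnion : ∫ x in (⋃ j ∈ Good, Set.Ioc (L j) (R j)), |f x - g x| =
      ∑ j ∈ Good, ∫ x in Set.Ioc (L j) (R j), |f x - g x| :=
    MeasureTheory.integral_biUnion_finset Good (fun j _ => measurableSet_Ioc) hpair
      (fun j _ => habs.mono_set (hIocsub j))
  have hmono2 : ∫ x in (⋃ j ∈ Good, Set.Ioc (L j) (R j)), |f x - g x| ≤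
      ∫ t in Set.Icc (0:ℝ) 1, |f t - g t| := by
    apply setIntegral_mono_set habs
    · filter_upwards with t using abs_nonneg _
    · exact HasSubset.Subset.eventuallyLE (Set.iUnion₂_subset fun j _ => hIocsub j)
  have hsum_lb : (Good.card : ℝ) * (hr/2) ≤
      ∑ j ∈ Good, ∫ x in Set.Ioc (L j) (R j), |f x - g x| := by
    have := Finset.card_nsmul_le_sum Good _ _ hbump
    simpa [nsmul_eq_mul] using this
  have h2K : (2:ℝ)^K * hr = 1/8 := by
    rw [hhr, show (2:ℝ)^(K+3) = 8*2^K from by ring]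
    rw [mul_inv]
    have : (2:ℝ)^K ≠ 0 := by positivity
    field_simp
  calc (1:ℝ)/64 ≤ (3*2^K : ℝ) * (hr/2) := by
        rw [show (3*2^K : ℝ)*(hr/2) = 3*((2:ℝ)^K*hr)/2 from by ring, h2K]
        norm_num
    _ ≤ (Good.card : ℝ) * (hr/2) := by
        apply mul_le_mul_of_nonneg_right _ (by positivity)
        exact_mod_cast hGoodcard
    _ ≤ ∑ j ∈ Good, ∫ x in Set.Ioc (L j) (R j), |f x - g x| := hsum_lb
    _ ≤ ∫ t in Set.Icc (0:ℝ) 1, |f t - g t| := by rw [← hUnion]; exact hmono2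
/-- a piecewise affine function with too few pieces cannot match a
function crossing the level `1/2` many times (so the `L¹` distance is positive);
in the specific case `g = τ^[k]`, any piecewise affine `f` with at most `2^(k-3)`
pieces is at `L¹` distance at least `1/64` from `τ^[k]` on `[0,1]`. -/
theorem inapproximability_of_oscillations :
    (∀ (f g : ℝ → ℝ) (p n : ℕ) (x : Fin (n + 1) → ℝ),
      PiecewiseAffineOnUnitAtMost f p →
      ContinuousOn g (Set.Icc (0 : ℝ) 1) →
      (∀ t ∈ Set.Icc (0 : ℝ) 1, g t ∈ Set.Icc (0 : ℝ) 1) →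
      StrictMono x → 0 ≤ x 0 → x (Fin.last n) ≤ 1 →
      ((∀ i : Fin (n + 1), if Even (i : ℕ) then 1 / 2 ≤ g (x i) else g (x i) < 1 / 2) ∨
        (∀ i : Fin (n + 1), if Even (i : ℕ) then g (x i) < 1 / 2 else 1 / 2 ≤ g (x i))) →
      p < n / 2 →
      ∃ C : ℝ, 0 < C ∧ C ≤ ∫ t in Set.Icc (0 : ℝ) 1, |f t - g t|) ∧
    (∀ k : ℕ, 3 ≤ k → ∀ f : ℝ → ℝ,
      PiecewiseAffineOnUnitAtMost f (2 ^ (k - 3)) →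
      (1 : ℝ) / 64 ≤ ∫ t in Set.Icc (0 : ℝ) 1, |f t - tent^[k] t|) := by
  constructor
  · intro f g p n x hpw hgc _ hmono hx0 hxn hosc hpn
    exact part_one f g p n x hpw hgc hmono hx0 hxn hosc hpn
  · intro k hk f hpw
    exact part_two k hk f hpw
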